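/- Let 0 ≤ λ < 1 and α(s) = (−λs + 2 arctan(√((1+λ)/(1−λ)) tanh((s/2)√(1−λ²))), log(−λ + cosh(s√(1−λ²)))). Then α is parametrized by arc length: α₁'(s)² + α₃'(s)² = 1 for all s ∈ ℝ. -/

import Mathlib

open Real

theorem stmt_4 (lam : ℝ) (hlam0 : 0 ≤ lam) (hlam1 : lam < 1)
    (a1 a3 : ℝ → ℝ)
    (ha1 : ∀ s, a1 s = -lam * s +
      2 * arctan (Real.sqrt ((1 + lam) / (1 - lam)) * Real.tanh (s / 2 * Real.sqrt (1 - lam ^ 2))))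
    (ha3 : ∀ s, a3 s = Real.log (-lam + Real.cosh (s * Real.sqrt (1 - lam ^ 2))))
    (s : ℝ) :
    (deriv a1 s) ^ 2 + (deriv a3 s) ^ 2 = 1 := by
  have h1l : (0:ℝ) < 1 - lam := by linarith
  have h1l2 : (0:ℝ) < 1 - lam ^ 2 := by nlinarith
  set m := Real.sqrt (1 - lam ^ 2) with hmdef
  set c := Real.sqrt ((1 + lam) / (1 - lam)) with hcdef
  have hm2 : m ^ 2 = 1 - lam ^ 2 := Real.sq_sqrt h1l2.le
  have hc2 : c ^ 2 = (1 + lam) / (1 - lam) := Real.sq_sqrt (by positivity)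
  have hcm : c * m = 1 + lam := by
    rw [hcdef, hmdef, ← Real.sqrt_mul (by positivity)]
    rw [show (1 + lam) / (1 - lam) * (1 - lam ^ 2) = (1 + lam) ^ 2 by field_simp; ring]
    exact Real.sqrt_sq (by linarith)
  set y := s / 2 * m with hydef
  set C := Real.cosh y with hCdef
  set S := Real.sinh y with hSdef
  have hC1 : 1 ≤ C := Real.one_le_cosh y
  have hC0 : C ≠ 0 := by positivity
  have hCS : C ^ 2 = S ^ 2 + 1 := Real.cosh_sq y
  have hS2 : S ^ 2 = C ^ 2 - 1 := by linarith
  set D := 2 * C ^ 2 - 1 - lam with hDdef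
  have hDpos : 0 < D := by nlinarith
  have htanh : Real.tanh y = S / C := Real.tanh_eq_sinh_div_cosh y
  -- derivative of a1
  have hy : HasDerivAt (fun s : ℝ => s / 2 * m) (m / 2) s := by
    have h := ((hasDerivAt_id s).div_const 2).mul_const m
    rw [show m / 2 = 1 / 2 * m by ring]
    exact h
  have hsinh : HasDerivAt (fun s : ℝ => Real.sinh (s / 2 * m)) (C * (m / 2)) s :=
    (Real.hasDerivAt_sinh y).comp (h₂ := Real.sinh) s hy
  have hcosh : HasDerivAt (fun s : ℝ => Real.cosh (s / 2 * m)) (S * (m / 2)) s :=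
    (Real.hasDerivAt_cosh y).comp (h₂ := Real.cosh) s hy
  have htanh' : HasDerivAt (fun s : ℝ => Real.tanh (s / 2 * m))
      ((C * (m / 2) * C - S * (S * (m / 2))) / C ^ 2) s := by
    have := hsinh.div hcosh hC0
    refine HasDerivAt.congr_of_eventuallyEq this ?_
    filter_upwards with x using (Real.tanh_eq_sinh_div_cosh _)
  have harctan : HasDerivAt (fun s : ℝ =>
      -lam * s + 2 * Real.arctan (c * Real.tanh (s / 2 * m)))
      (-lam * 1 + 2 * ((1 / (1 + (c * Real.tanh y) ^ 2)) *
        (c * ((C * (m / 2) * C - S * (S * (m / 2))) / C ^ 2)))) s := by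
    exact ((hasDerivAt_id s).const_mul (-lam)).add
      (((Real.hasDerivAt_arctan (c * Real.tanh y)).comp (h₂ := Real.arctan) s (htanh'.const_mul c)).const_mul 2)
  have e1 : deriv a1 s = -lam * 1 + 2 * ((1 / (1 + (c * Real.tanh y) ^ 2)) *
      (c * ((C * (m / 2) * C - S * (S * (m / 2))) / C ^ 2))) := by
    rw [funext ha1]; exact harctan.deriv
  -- derivative of a3
  have hx : HasDerivAt (fun s : ℝ => s * m) m s := by
    simpa using (hasDerivAt_id s).mul_const m
  have hsm : s * m = 2 * y := by rw [hydef]; ring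
  have hcosh2 : Real.cosh (s * m) = C ^ 2 + S ^ 2 := by rw [hsm]; exact Real.cosh_two_mul y
  have hsinh2 : Real.sinh (s * m) = 2 * S * C := by rw [hsm]; exact Real.sinh_two_mul y
  have hpos : -lam + Real.cosh (s * m) ≠ 0 := by
    have := Real.one_le_cosh (s * m); linarith
  have hlog : HasDerivAt (fun s : ℝ => Real.log (-lam + Real.cosh (s * m)))
      ((Real.sinh (s * m) * m) / (-lam + Real.cosh (s * m))) s := by
    have hin : HasDerivAt (fun s : ℝ => -lam + Real.cosh (s * m))
        (Real.sinh (s * m) * m) s := by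
      have := ((Real.hasDerivAt_cosh (s * m)).comp s hx).const_add (-lam)
      exact this
    exact hin.log hpos
  have e3 : deriv a3 s = (Real.sinh (s * m) * m) / (-lam + Real.cosh (s * m)) := by
    rw [funext ha3]; exact hlog.deriv
  -- simplify derivs
  have E3 : deriv a3 s = (2 * m * S * C) / D := by
    rw [e3, hcosh2, hsinh2, show -lam + (C ^ 2 + S ^ 2) = D by rw [hDdef]; linarith]
    ring
  have hnum : C * (m / 2) * C - S * (S * (m / 2)) = m / 2 := by
    linear_combination (m / 2) * hCS
  have hfrac : 1 + (c * (S / C)) ^ 2 = D / ((1 - lam) * C ^ 2) := by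
    rw [hDdef, mul_pow, hc2, div_pow, hS2]
    field_simp
    ring
  have E1 : deriv a1 s = (1 + lam - 2 * lam * C ^ 2) / D := by
    rw [e1, htanh, hnum, hfrac]
    rw [one_div_div]
    field_simp
    have hcm2 : c ^ 2 * m ^ 2 = (1 + lam) ^ 2 := by
      linear_combination (c * m + 1 + lam) * hcm
    linear_combination (1 - lam) * hcm - lam * hDdef
  rw [E1, E3, div_pow, div_pow, ← add_div, div_eq_one_iff_eq (by positivity)]
  linear_combination (4 * C ^ 2 * S ^ 2) * hm2 + (4 * C ^ 2 * (1 - lam ^ 2)) * hS2
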